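/- For every n ≥ 1, the word α(n)⁺ (α(n) with its last letter incremented) has R_{n+4}[i:] as a suffix if and only if i ≥ 6, where α is defined by α(1) = B_1 R_4 C B_1 R_4 and α(n) = α(n−1)⁺ R_{n+3} C α(n−1)⁺ R_{n+3} for n ≥ 2, with C = 0102030102 and B_1 a fixed word whose suffix agrees with the required pattern 0203 R_3⁺ R_4. -/

import Mathlib

def rho (w : List ℕ) : List ℕ := w.flatMap (fun n => [0, n + 1])

def R (n : ℕ) : List ℕ := rho^[n] [0]

def succW (w : List ℕ) : List ℕ := w.dropLast ++ [w.getLast! + 1]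

/-- The constant word C = 0102030102. -/
def C : List ℕ := [0, 1, 0, 2, 0, 3, 0, 1, 0, 2]

/-- The word 0203·R₃⁺·R₄⁺·⋯·R_{n+2}⁺·R_{n+3}. -/
def S (n : ℕ) : List ℕ :=
  [0, 2, 0, 3] ++ ((List.range n).map (fun j => succW (R (j + 3)))).flatten ++ R (n + 3)

lemma succW_concat (a : List ℕ) (x : ℕ) : succW (a ++ [x]) = a ++ [x + 1] := by
  unfold succW
  rw [List.dropLast_concat, List.getLast!_of_getLast? List.getLast?_concat]

lemma succW_append (a b : List ℕ) (hb : b ≠ []) : succW (a ++ b) = a ++ succW b := by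
  rcases List.eq_nil_or_concat b with h | ⟨c, x, rfl⟩
  · exact absurd h hb
  · rw [List.concat_eq_append, ← List.append_assoc, succW_concat, succW_concat,
      List.append_assoc]

lemma rho_append (a b : List ℕ) : rho (a ++ b) = rho a ++ rho b := by
  simp [rho]

lemma R_succ_rho (n : ℕ) : R (n + 1) = rho (R n) := by
  rw [R, Function.iterate_succ_apply']; rfl

lemma R_ne_nil (n : ℕ) : R n ≠ [] := by
  induction n with
  | zero => simp [R]
  | succ n ih =>
    rw [R_succ_rho]
    rcases List.eq_nil_or_concat (R n) with h | ⟨c, x, h⟩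
    · exact absurd h ih
    · rw [h, List.concat_eq_append, rho_append]; simp [rho]

lemma rho_succW (w : List ℕ) (hw : w ≠ []) : rho (succW w) = succW (rho w) := by
  rcases List.eq_nil_or_concat w with h | ⟨c, x, rfl⟩
  · exact absurd h hw
  · rw [List.concat_eq_append, succW_concat, rho_append, rho_append]
    show rho c ++ ([0] ++ [x + 1 + 1]) = succW (rho c ++ ([0] ++ [x + 1]))
    rw [← List.append_assoc, ← List.append_assoc, succW_concat]

lemma R_succ (n : ℕ) : R (n + 1) = R n ++ succW (R n) := by
  induction n with
  | zero => decide
  | succ n ih =>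
    rw [R_succ_rho (n + 1), ih, rho_append, rho_succW _ (R_ne_nil n), ← R_succ_rho, ← ih]

lemma Rsplit (n : ℕ) : R (n + 4) =
    [0, 1, 0, 2, 0, 1, 0, 3] ++
      (((List.range n).map (fun j => succW (R (j + 3)))).flatten ++ succW (R (n + 3))) := by
  induction n with
  | zero =>
    rw [show (0:ℕ) + 4 = 3 + 1 from rfl, R_succ]
    simp
    decide
  | succ n ih =>
    rw [show n + 1 + 4 = (n + 4) + 1 from rfl, R_succ, ih, List.range_succ]
    simp [List.append_assoc]

lemma succW_suffix {s w : List ℕ} (h : s <:+ w) (hs : s ≠ []) : succW s <:+ succW w := by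
  obtain ⟨t, rfl⟩ := h
  rw [succW_append _ _ hs]
  exact ⟨t, rfl⟩

lemma suffix_cancel {a b X w : List ℕ} (h1 : a ++ X <:+ w) (h2 : b ++ X <:+ w) :
    a <:+ b ∨ b <:+ a := by
  rcases List.suffix_or_suffix_of_suffix h1 h2 with h | h <;> obtain ⟨t, ht⟩ := h
  · left
    rw [← List.append_assoc] at ht
    exact ⟨t, List.append_cancel_right ht⟩
  · right
    rw [← List.append_assoc] at ht
    exact ⟨t, List.append_cancel_right ht⟩

/-- For n ≥ 1, R_{n+4}[i:] is a suffix of α(n)⁺ iff i ≥ 6; here α satisfies the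
recursion α(n) = α(n−1)⁺ · R_{n+3} · C · α(n−1)⁺ · R_{n+3} for n ≥ 2, and
0203·R₃⁺·⋯·R_{n+2}⁺·R_{n+3} is a suffix of α(n) for n ≥ 1. -/
theorem suffix_iff_ge_six (α : ℕ → List ℕ)
    (hrec : ∀ n, 2 ≤ n →
      α n = succW (α (n - 1)) ++ R (n + 3) ++ C ++ succW (α (n - 1)) ++ R (n + 3))
    (hsuf : ∀ n, 1 ≤ n → S n <:+ α n) :
    ∀ n, 1 ≤ n → ∀ i : ℕ, ((R (n + 4)).drop i <:+ succW (α n) ↔ 6 ≤ i) := by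
  intro n hn i
  set X : List ℕ :=
    ((List.range n).map (fun j => succW (R (j + 3)))).flatten ++ succW (R (n + 3)) with hX
  have hSX : succW (S n) = [0, 2, 0, 3] ++ X := by
    rw [hX, S, succW_append _ _ (R_ne_nil (n + 3)), List.append_assoc]
  have hS' : [0, 2, 0, 3] ++ X <:+ succW (α n) := by
    rw [← hSX]
    exact succW_suffix (hsuf n hn) (by simp [S])
  constructor
  · intro h
    by_contra hi
    push_neg at hi
    have hdrop : (R (n + 4)).drop i = (([0,1,0,2,0,1,0,3] : List ℕ).drop i) ++ X := by
      rw [hX, Rsplit, List.drop_append]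
      have : i - ([0,1,0,2,0,1,0,3] : List ℕ).length = 0 := by simp; omega
      rw [this, List.drop_zero]
    rw [hdrop] at h
    have hcomp := suffix_cancel h hS'
    interval_cases i <;> revert hcomp <;> decide
  · intro h
    have h6 : (R (n + 4)).drop 6 <:+ succW (α n) := by
      have hdrop : (R (n + 4)).drop 6 = ([0, 3] : List ℕ) ++ X := by
        rw [hX, Rsplit, List.drop_append]
        rfl
      rw [hdrop]
      exact List.IsSuffix.trans ⟨[0, 2], rfl⟩ hS'
    have : (R (n + 4)).drop i = ((R (n + 4)).drop 6).drop (i - 6) := by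
      rw [List.drop_drop]
      congr 1
      omega
    rw [this]
    exact (List.drop_suffix _ _).trans h6
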